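/- arXiv:0706.3981 — 2 statements merged into one kernel-verified Lean document; each statement's English description precedes it below -/
import Mathlib

section
/- Let M be a closed connected smooth manifold and X a cohomology-free smooth vector field on M. If u : M → ℝ is a smooth function with Xu = 0 on M, then u is constant. (The kernel of the Lie derivative operator on smooth functions is one-dimensional, consisting of the constants.) -/
open Manifold

set_option linter.unusedSectionVars false

section Aux

variable {E : Type*} [NormedAddCommGroup E] [NormedSpace ℝ E]
    {H : Type*} [TopologicalSpace H] {I : ModelWithCorners ℝ E H} [I.Boundaryless]
    {M : Type*} [TopologicalSpace M] [ChartedSpace H M] [IsManifold I (⊤ : ℕ∞) M]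

/-- At a local maximum of a differentiable function on a boundaryless manifold,
the manifold derivative vanishes. -/
lemma mfderiv_eq_zero_of_isLocalMax {f : M → ℝ} {x : M}
    (hf : MDifferentiableAt I 𝓘(ℝ) f x) (hmax : IsLocalMax f x) :
    mfderiv I 𝓘(ℝ) f x = 0 := by
  rw [hf.mfderiv, I.range_eq_univ, fderivWithin_univ]
  have hgx : (extChartAt I x).symm ((extChartAt I x) x) = x :=
    (extChartAt I x).left_inv (mem_extChartAt_source (I := I) x)
  have hcont : ContinuousAt (extChartAt I x).symm ((extChartAt I x) x) :=
    continuousAt_extChartAt_symm' (mem_extChartAt_source (I := I) x)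
  have htend : Filter.Tendsto (extChartAt I x).symm (nhds ((extChartAt I x) x)) (nhds x) := by
    have := hcont.tendsto
    rwa [hgx] at this
  have hmax2 : IsMaxFilter f (nhds x) ((extChartAt I x).symm ((extChartAt I x) x)) := by
    rw [hgx]; exact hmax
  have h1 : IsLocalMax (f ∘ (extChartAt I x).symm) ((extChartAt I x) x) :=
    hmax2.comp_tendsto htend
  have hmax' : IsLocalMax (writtenInExtChartAt I 𝓘(ℝ) x f) ((extChartAt I x) x) := by
    have : writtenInExtChartAt I 𝓘(ℝ) x f = f ∘ (extChartAt I x).symm := by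
      ext y; simp [writtenInExtChartAt, Function.comp, chartAt_self_eq]
    rw [this]; exact h1
  exact hmax'.fderiv_eq_zero

end Aux

theorem stmt6
    {E : Type*} [NormedAddCommGroup E] [NormedSpace ℝ E] [FiniteDimensional ℝ E]
    {H : Type*} [TopologicalSpace H] (I : ModelWithCorners ℝ E H) [I.Boundaryless]
    {M : Type*} [TopologicalSpace M] [ChartedSpace H M] [IsManifold I (⊤ : ℕ∞) M]
    [CompactSpace M] [ConnectedSpace M]
    (X : (x : M) → TangentSpace I x)
    (hX : ContMDiff I I.tangent (⊤ : ℕ∞) (fun x => (⟨x, X x⟩ : TangentBundle I M)))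
    (hCF : ∀ f : M → ℝ, ContMDiff I 𝓘(ℝ) (⊤ : ℕ∞) f →
      ∃ c : ℝ, ∃ u : M → ℝ, ContMDiff I 𝓘(ℝ) (⊤ : ℕ∞) u ∧
        ∀ x, mfderiv I 𝓘(ℝ) u x (X x) = f x - c)
    (u : M → ℝ) (hu : ContMDiff I 𝓘(ℝ) (⊤ : ℕ∞) u)
    (h : ∀ x, mfderiv I 𝓘(ℝ) u x (X x) = 0) :
    ∃ c : ℝ, ∀ x, u x = c := by
  obtain ⟨c, v, hv, hXv⟩ := hCF u hu
  refine ⟨c, ?_⟩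
  -- the auxiliary function w = (u - c) * v
  set w : M → ℝ := fun x => (u x - c) * v x with hw_def
  have hu' : ∀ x, MDifferentiableAt I 𝓘(ℝ) u x := fun x => (hu x).mdifferentiableAt (by simp)
  have hv' : ∀ x, MDifferentiableAt I 𝓘(ℝ) v x := fun x => (hv x).mdifferentiableAt (by simp)
  -- derivative of w along X is (u - c)^2
  have hw_deriv : ∀ x, mfderiv I 𝓘(ℝ) w x (X x) = (u x - c) * (u x - c) := by
    intro x
    have ha : HasMFDerivAt I 𝓘(ℝ) (fun y => u y - c) x (mfderiv I 𝓘(ℝ) u x) := by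
      exact ((hu' x).hasMFDerivAt.sub (hasMFDerivAt_const (I := I) (I' := 𝓘(ℝ)) c x)).congr_mfderiv (by exact sub_zero _)
    have hb : HasMFDerivAt I 𝓘(ℝ) v x (mfderiv I 𝓘(ℝ) v x) := (hv' x).hasMFDerivAt
    have hmul := ha.mul hb
    obtain ⟨Dv, hDv⟩ : ∃ D : E →L[ℝ] ℝ, D = mfderiv I 𝓘(ℝ) v x := ⟨_, rfl⟩
    obtain ⟨Du, hDu⟩ : ∃ D : E →L[ℝ] ℝ, D = mfderiv I 𝓘(ℝ) u x := ⟨_, rfl⟩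
    have hXvx : Dv (X x) = u x - c := by rw [hDv]; exact hXv x
    have hx0 : Du (X x) = 0 := by rw [hDu]; exact h x
    have hD : HasMFDerivAt I 𝓘(ℝ) w x ((u x - c) • Dv + v x • Du) := by
      rw [hDv, hDu]; exact hmul
    rw [hD.mfderiv]
    have happ : ((u x - c) • Dv + v x • Du) (X x)
        = (u x - c) * Dv (X x) + v x * Du (X x) := rfl
    exact happ.trans (by rw [hXvx, hx0]; ring)
  have hw_smooth : ContMDiff I 𝓘(ℝ) (⊤ : ℕ∞) w := (hu.sub contMDiff_const).mul hv
  have hw_cont : Continuous w := hw_smooth.continuous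
  -- at a global max of w, (u-c)^2 = 0, hence w ≤ 0; similarly w ≥ 0
  have hmax : ∃ p, ∀ x, w x ≤ w p := by
    obtain ⟨p, -, hp⟩ := isCompact_univ.exists_isMaxOn Set.univ_nonempty
      hw_cont.continuousOn
    exact ⟨p, fun x => hp (Set.mem_univ x)⟩
  have hmin : ∃ p, ∀ x, w p ≤ w x := by
    obtain ⟨p, -, hp⟩ := isCompact_univ.exists_isMinOn Set.univ_nonempty
      hw_cont.continuousOn
    exact ⟨p, fun x => hp (Set.mem_univ x)⟩
  obtain ⟨p, hp⟩ := hmax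
  obtain ⟨q, hq⟩ := hmin
  have hwp : w p = 0 := by
    have hlm : IsLocalMax w p := Filter.Eventually.of_forall hp
    have hd : mfderiv I 𝓘(ℝ) w p = 0 :=
      mfderiv_eq_zero_of_isLocalMax ((hw_smooth p).mdifferentiableAt (by simp)) hlm
    have := hw_deriv p
    rw [hd] at this
    have h1 : (u p - c) * (u p - c) = 0 := by
      rw [← this]; simp; rfl
    have h0 : u p - c = 0 := mul_self_eq_zero.mp h1
    simp [hw_def, h0]
  have hwq : w q = 0 := by
    have hlm : IsLocalMax (-w) q := Filter.Eventually.of_forall (fun x => neg_le_neg (hq x))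
    have hnw : ContMDiff I 𝓘(ℝ) (⊤ : ℕ∞) (-w) := hw_smooth.neg
    have hd : mfderiv I 𝓘(ℝ) (-w) q = 0 :=
      mfderiv_eq_zero_of_isLocalMax ((hnw q).mdifferentiableAt (by simp)) hlm
    have hdw : mfderiv I 𝓘(ℝ) w q = 0 := by
      have hneg : HasMFDerivAt I 𝓘(ℝ) (-w) q (-(mfderiv I 𝓘(ℝ) w q)) :=
        ((hw_smooth q).mdifferentiableAt (by simp)).hasMFDerivAt.neg
      have := hneg.mfderiv
      rw [hd] at this
      rw [← neg_neg (mfderiv I 𝓘(ℝ) w q), ← this]; exact neg_zero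
    have := hw_deriv q
    rw [hdw] at this
    have h1 : (u q - c) * (u q - c) = 0 := by
      rw [← this]; simp; rfl
    have h0 : u q - c = 0 := mul_self_eq_zero.mp h1
    simp [hw_def, h0]
  have hw0 : ∀ x, w x = 0 := fun x => le_antisymm (hwp ▸ hp x) (hwq ▸ hq x)
  -- conclude: if u x ≠ c at some point, then v vanishes on a neighborhood there,
  -- so mfderiv v = 0 there, contradicting Xv = u - c ≠ 0
  intro x
  by_contra hx
  have hU : {y | u y ≠ c} ∈ nhds x := by
    have : IsOpen {y | u y ≠ c} := isOpen_ne.preimage hu.continuous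
    exact this.mem_nhds hx
  have hveq : v =ᶠ[nhds x] (fun _ => (0 : ℝ)) := by
    filter_upwards [hU] with y hy
    have := hw0 y
    have hne : u y - c ≠ 0 := sub_ne_zero_of_ne hy
    exact (mul_eq_zero.mp this).resolve_left hne
  have hdv : mfderiv I 𝓘(ℝ) v x = 0 := by
    rw [hveq.mfderiv_eq, mfderiv_const]; rfl
  have := hXv x
  rw [hdv] at this
  simp at this
  exact hx (sub_eq_zero.mp this.symm)
end

section
/- Let H be a real Hilbert space, let Z and Y be normed real vector spaces, let K : H → Z be a compact continuous linear operator, let D be a linear subspace of H, and let L : D → Y be a linear map. Assume: (i) there is a constant C > 0 such that ‖f‖_H ≤ C(‖K f‖_Z + ‖L f‖_Y) for all f ∈ D; (ii) for every sequence (f_j) in D which converges weakly in H to some f and satisfies ‖L f_j‖_Y → 0, one has f = 0. Then there exists a constant C' > 0 such that ‖f‖_H ≤ C' ‖L f‖_Y for all f ∈ D. (Abstract form of the a priori estimate underlying the Chen–Chi theorem that globally hypoelliptic vector fields are C^∞-stable.) -/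
open Filter

lemma diag_extract {H : Type*} [NormedAddCommGroup H] [InnerProductSpace ℝ H]
    (g : ℕ → H) (e : ℕ → H) (B : ℝ) (hB : ∀ n, ‖g n‖ ≤ B) :
    ∃ φ : ℕ → ℕ, StrictMono φ ∧ ∀ k, ∃ c : ℝ,
      Tendsto (fun n => (inner ℝ (g (φ n)) (e k) : ℝ)) atTop (nhds c) := by
  set S : Set (ℕ → ℝ) := Set.univ.pi (fun k => Set.Icc (-(B * ‖e k‖)) (B * ‖e k‖)) with hS
  have hScomp : IsCompact S := isCompact_univ_pi fun k => isCompact_Icc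
  have hmem : ∀ n, (fun k => (inner ℝ (g n) (e k) : ℝ)) ∈ S := by
    intro n k _
    have h1 : |(inner ℝ (g n) (e k) : ℝ)| ≤ ‖g n‖ * ‖e k‖ := abs_real_inner_le_norm _ _
    have h2 : ‖g n‖ * ‖e k‖ ≤ B * ‖e k‖ :=
      mul_le_mul_of_nonneg_right (hB n) (norm_nonneg _)
    have := h1.trans h2
    exact ⟨by linarith [abs_le.1 this], (abs_le.1 this).2⟩
  obtain ⟨a, -, φ, hφ, hconv⟩ := hScomp.isSeqCompact (x := fun n k => (inner ℝ (g n) (e k) : ℝ)) hmem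
  exact ⟨φ, hφ, fun k => ⟨a k, (tendsto_pi_nhds.1 hconv) k⟩⟩

lemma weak_seq_compact {H : Type*} [NormedAddCommGroup H] [InnerProductSpace ℝ H]
    [CompleteSpace H] (g : ℕ → H) (B : ℝ) (hB : ∀ n, ‖g n‖ ≤ B) :
    ∃ (φ : ℕ → ℕ) (a : H), StrictMono φ ∧
      ∀ y : H, Tendsto (fun n => (inner ℝ (g (φ n)) y : ℝ)) atTop (nhds (inner ℝ a y)) := by
  have hB0 : 0 ≤ B := (norm_nonneg (g 0)).trans (hB 0)
  -- countable dense family in the closed span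
  set M : Submodule ℝ H := (Submodule.span ℝ (Set.range g)).topologicalClosure with hM
  have hsep : TopologicalSpace.IsSeparable (Submodule.span ℝ (Set.range g) : Set H) :=
    (Set.countable_range g).isSeparable.span
  obtain ⟨c, hc_count, hc_sub⟩ := hsep
  have hc'_count : (insert (0:H) c).Countable := hc_count.insert 0
  obtain ⟨e, he⟩ := hc'_count.exists_eq_range ⟨0, Set.mem_insert 0 c⟩
  -- extraction
  obtain ⟨φ, hφ, hconv⟩ := diag_extract g e B hB
  haveI : CompleteSpace M := (Submodule.isClosed_topologicalClosure _).completeSpace_coe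
  have hgM : ∀ n, g n ∈ M := fun n =>
    Submodule.le_topologicalClosure _ (Submodule.subset_span ⟨n, rfl⟩)
  -- the projection of any y onto M is approximated by the e k
  have happrox : ∀ y : H, y ∈ M → ∀ ε > 0, ∃ k, ‖y - e k‖ < ε := by
    intro y hy ε hε
    have : (M : Set H) ⊆ closure (Set.range e) := by
      have h1 : (M : Set H) ⊆ closure (Submodule.span ℝ (Set.range g) : Set H) :=
        subset_rfl
      have h2 : closure (Submodule.span ℝ (Set.range g) : Set H) ⊆ closure (Set.range e) := by
        apply closure_minimal _ isClosed_closure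
        refine hc_sub.trans (closure_mono ?_)
        rw [← he]; exact Set.subset_insert _ _
      exact h1.trans h2
    obtain ⟨z, hz, hzy⟩ := Metric.mem_closure_iff.1 (this hy) ε hε
    obtain ⟨k, rfl⟩ := hz
    exact ⟨k, by rwa [← dist_eq_norm]⟩
  -- each y: Cauchy
  have hCauchy : ∀ y : H, CauchySeq (fun n => (inner ℝ (g (φ n)) y : ℝ)) := by
    intro y
    set P := (M.orthogonalProjection y : H) with hP
    have hinner : ∀ n, (inner ℝ (g (φ n)) y : ℝ) = inner ℝ (g (φ n)) P := by
      intro n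
      have horth : y - P ∈ Mᗮ := M.sub_starProjection_mem_orthogonal y
      have hz0 : (inner ℝ (g (φ n)) (y - P) : ℝ) = 0 := horth (g (φ n)) (hgM (φ n))
      rw [← sub_eq_zero, ← inner_sub_right]
      exact hz0
    rw [Metric.cauchySeq_iff]
    intro ε hε
    obtain ⟨k, hk⟩ := happrox P (M.orthogonalProjection y).2 (ε / 4 / (B + 1))
      (by positivity)
    obtain ⟨ck, hck⟩ := hconv k
    obtain ⟨N, hN⟩ := (Metric.tendsto_atTop.1 hck) (ε / 4) (by positivity)
    refine ⟨N, fun m hm n hn => ?_⟩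
    have key : ∀ j, N ≤ j → |(inner ℝ (g (φ j)) y : ℝ) - ck| < ε / 2 := by
      intro j hj
      have h1 : |(inner ℝ (g (φ j)) (P - e k) : ℝ)| ≤ B * (ε / 4 / (B + 1)) := by
        calc |(inner ℝ (g (φ j)) (P - e k) : ℝ)| ≤ ‖g (φ j)‖ * ‖P - e k‖ :=
              abs_real_inner_le_norm _ _
          _ ≤ B * (ε / 4 / (B + 1)) := by
              apply mul_le_mul (hB _) hk.le (norm_nonneg _) hB0
      have h2 : B * (ε / 4 / (B + 1)) ≤ ε / 4 := by
        have hd : B / (B + 1) ≤ 1 := by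
          rw [div_le_one (by positivity)]; linarith
        calc B * (ε / 4 / (B + 1)) = ε / 4 * (B / (B + 1)) := by ring
          _ ≤ ε / 4 * 1 := mul_le_mul_of_nonneg_left hd (by positivity)
          _ = ε / 4 := by ring
      have h3 : |(inner ℝ (g (φ j)) (e k) : ℝ) - ck| < ε / 4 := by
        have := hN j hj
        rwa [Real.dist_eq] at this
      have h4 : (inner ℝ (g (φ j)) y : ℝ) - ck
          = inner ℝ (g (φ j)) (P - e k) + ((inner ℝ (g (φ j)) (e k) : ℝ) - ck) := by
        rw [hinner j, inner_sub_right]; ring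
      rw [h4]
      calc |(inner ℝ (g (φ j)) (P - e k) : ℝ) + ((inner ℝ (g (φ j)) (e k) : ℝ) - ck)|
          ≤ |(inner ℝ (g (φ j)) (P - e k) : ℝ)| + |(inner ℝ (g (φ j)) (e k) : ℝ) - ck| :=
            abs_add_le _ _
        _ < ε / 4 + ε / 4 := by
            have := h1.trans h2
            exact add_lt_add_of_le_of_lt this h3
        _ = ε / 2 := by ring
    have := key m hm
    have := key n hn
    rw [Real.dist_eq]
    calc |(inner ℝ (g (φ m)) y : ℝ) - inner ℝ (g (φ n)) y|
        = |((inner ℝ (g (φ m)) y : ℝ) - ck) - ((inner ℝ (g (φ n)) y : ℝ) - ck)| := by ring_nf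
      _ ≤ |(inner ℝ (g (φ m)) y : ℝ) - ck| + |(inner ℝ (g (φ n)) y : ℝ) - ck| := abs_sub _ _
      _ < ε / 2 + ε / 2 := add_lt_add (key m hm) (key n hn)
      _ = ε := by ring
  -- limits exist
  choose F hF using fun y : H => cauchySeq_tendsto_of_complete (hCauchy y)
  -- F is linear and bounded
  have hFadd : ∀ y z, F (y + z) = F y + F z := by
    intro y z
    refine tendsto_nhds_unique ?_ ((hF y).add (hF z))
    simpa [inner_add_right] using hF (y + z)
  have hFsmul : ∀ (r : ℝ) y, F (r • y) = r • F y := by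
    intro r y
    refine tendsto_nhds_unique ?_ ((hF y).const_mul r)
    simpa [inner_smul_right] using hF (r • y)
  have hFbound : ∀ y, ‖F y‖ ≤ B * ‖y‖ := by
    intro y
    have : ∀ n, |(inner ℝ (g (φ n)) y : ℝ)| ≤ B * ‖y‖ := fun n =>
      (abs_real_inner_le_norm _ _).trans
        (mul_le_mul_of_nonneg_right (hB _) (norm_nonneg _))
    have habs : Tendsto (fun n => |(inner ℝ (g (φ n)) y : ℝ)|) atTop (nhds |F y|) :=
      (hF y).abs
    exact le_of_tendsto habs (Eventually.of_forall this)
  set ℓ : H →L[ℝ] ℝ := LinearMap.mkContinuous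
    { toFun := F, map_add' := hFadd, map_smul' := hFsmul } B hFbound with hℓ
  set a : H := (InnerProductSpace.toDual ℝ H).symm ℓ with ha
  have hay : ∀ y, (inner ℝ a y : ℝ) = F y := by
    intro y
    have h1 : (inner ℝ a y : ℝ) = ℓ y := by
      rw [ha]; exact InnerProductSpace.toDual_symm_apply
    rw [h1]; rfl
  refine ⟨φ, a, hφ, fun y => ?_⟩
  rw [hay y]
  exact hF y

lemma compact_weak_to_norm {H Z : Type*} [NormedAddCommGroup H] [InnerProductSpace ℝ H]
    [CompleteSpace H] [NormedAddCommGroup Z] [NormedSpace ℝ Z]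
    (K : H →L[ℝ] Z) (hK : IsCompactOperator K)
    (u : ℕ → H) (B : ℝ) (hB : ∀ n, ‖u n‖ ≤ B)
    (hw : ∀ y : H, Tendsto (fun n => (inner ℝ (u n) y : ℝ)) atTop (nhds 0)) :
    Tendsto (fun n => K (u n)) atTop (nhds 0) := by
  have hB0 : 0 ≤ B := (norm_nonneg (u 0)).trans (hB 0)
  -- all K u n lie in a compact set
  have hS : IsCompact (closure (K '' Metric.closedBall 0 B)) := by
    have h := IsCompactOperator.isCompact_closure_image_closedBall (𝕜₁ := ℝ)
      (f := (K : H →ₗ[ℝ] Z)) hK B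
    exact h
  have hmem : ∀ n, K (u n) ∈ closure (K '' Metric.closedBall 0 B) := fun n =>
    subset_closure ⟨u n, by simpa [Metric.mem_closedBall, dist_eq_norm] using hB n, rfl⟩
  -- weak convergence of K u n to 0
  have hweakZ : ∀ ℓ : Z →L[ℝ] ℝ, Tendsto (fun n => ℓ (K (u n))) atTop (nhds 0) := by
    intro ℓ
    set w : H := (InnerProductSpace.toDual ℝ H).symm (ℓ.comp K) with hwdef
    have hrep : ∀ v : H, ℓ (K v) = inner ℝ w v := fun v =>
      (InnerProductSpace.toDual_symm_apply (𝕜 := ℝ) (y := ℓ.comp K) (x := v)).symm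
    have := hw w
    simp_rw [hrep]
    have hcomm : ∀ n, (inner ℝ w (u n) : ℝ) = inner ℝ (u n) w := fun n => real_inner_comm _ _
    simp_rw [hcomm]
    exact this
  -- conclude via subsequences
  apply tendsto_of_subseq_tendsto
  intro ns hns
  have hmem' : ∀ n, K (u (ns n)) ∈ closure (K '' Metric.closedBall 0 B) := fun n => hmem _
  obtain ⟨z, hzS, ms, hms, hconv⟩ := hS.isSeqCompact hmem'
  refine ⟨ms, ?_⟩
  have hz0 : z = 0 := by
    apply NormedSpace.eq_zero_of_forall_dual_eq_zero ℝ
    intro ℓ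
    have h1 : Tendsto (fun n => ℓ (K (u (ns (ms n))))) atTop (nhds (ℓ z)) :=
      (ℓ.continuous.tendsto z).comp hconv
    have h2 : Tendsto (fun n => ℓ (K (u (ns (ms n))))) atTop (nhds 0) :=
      (hweakZ ℓ).comp ((hns.comp hms.tendsto_atTop))
    exact tendsto_nhds_unique h1 h2
  rw [hz0] at hconv
  exact hconv

theorem stmt12
    {H : Type*} [NormedAddCommGroup H] [InnerProductSpace ℝ H] [CompleteSpace H]
    {Z : Type*} [NormedAddCommGroup Z] [NormedSpace ℝ Z]
    {Y : Type*} [NormedAddCommGroup Y] [NormedSpace ℝ Y]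
    (K : H →L[ℝ] Z) (hK : IsCompactOperator K)
    (D : Submodule ℝ H) (L : D →ₗ[ℝ] Y)
    (C : ℝ) (hC : 0 < C)
    (hest : ∀ f : D, ‖(f : H)‖ ≤ C * (‖K (f : H)‖ + ‖L f‖))
    (hweak : ∀ (fj : ℕ → D) (f : H),
      (∀ g : H, Tendsto (fun j => (inner ℝ ((fj j : H)) g : ℝ)) atTop (nhds (inner ℝ f g)))
      → Tendsto (fun j => ‖L (fj j)‖) atTop (nhds 0) → f = 0) :
    ∃ C' : ℝ, 0 < C' ∧ ∀ f : D, ‖(f : H)‖ ≤ C' * ‖L f‖ := by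
  by_contra hcon
  push_neg at hcon
  have hex : ∀ n : ℕ, ∃ f : D, ((n : ℝ) + 1) * ‖L f‖ < ‖(f : H)‖ := by
    intro n
    obtain ⟨f, hf⟩ := hcon ((n : ℝ) + 1) (by positivity)
    exact ⟨f, hf⟩
  choose f hf using hex
  have hfne : ∀ n, (f n : H) ≠ 0 := by
    intro n hn
    have := hf n
    rw [hn] at this
    simp at this
    nlinarith [norm_nonneg (L (f n)), this]
  set g : ℕ → D := fun n => (‖(f n : H)‖)⁻¹ • f n with hg
  have hgnorm : ∀ n, ‖(g n : H)‖ = 1 := by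
    intro n
    have h0 : ‖(f n : H)‖ ≠ 0 := norm_ne_zero_iff.2 (hfne n)
    simp [hg, norm_smul, abs_of_nonneg (inv_nonneg.2 (norm_nonneg _)), inv_mul_cancel₀ h0]
  have hLg : ∀ n, ‖L (g n)‖ < 1 / ((n : ℝ) + 1) := by
    intro n
    have h0 : (0:ℝ) < ‖(f n : H)‖ := norm_pos_iff.2 (hfne n)
    have hn1 : (0:ℝ) < (n : ℝ) + 1 := by positivity
    have hform : ‖L (g n)‖ = (‖(f n : H)‖)⁻¹ * ‖L (f n)‖ := by
      simp [hg, map_smul, norm_smul, abs_of_nonneg (inv_nonneg.2 (norm_nonneg _))]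
    have key := mul_lt_mul_of_pos_left (hf n) (inv_pos.2 h0)
    rw [inv_mul_cancel₀ h0.ne'] at key
    rw [hform, lt_div_iff₀ hn1]
    nlinarith [key]
  have hLg0 : Tendsto (fun n => ‖L (g n)‖) atTop (nhds 0) := by
    apply squeeze_zero (fun n => norm_nonneg _) (fun n => (hLg n).le)
    exact tendsto_one_div_add_atTop_nhds_zero_nat
  obtain ⟨φ, a, hφ, hwconv⟩ := weak_seq_compact (fun n => (g n : H)) 1 (fun n => (hgnorm n).le)
  have ha0 : a = 0 := by
    apply hweak (fun n => g (φ n)) a hwconv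
    exact hLg0.comp hφ.tendsto_atTop
  rw [ha0] at hwconv
  have hwconv0 : ∀ y : H, Tendsto (fun n => (inner ℝ ((g (φ n) : H)) y : ℝ)) atTop (nhds 0) := by
    intro y
    simpa using hwconv y
  have hKg : Tendsto (fun n => K ((g (φ n) : H))) atTop (nhds 0) :=
    compact_weak_to_norm K hK (fun n => (g (φ n) : H)) 1 (fun n => (hgnorm _).le) hwconv0
  have hKgn : Tendsto (fun n => ‖K ((g (φ n) : H))‖) atTop (nhds 0) := by
    simpa using hKg.norm
  have hsum : Tendsto (fun n => C * (‖K ((g (φ n) : H))‖ + ‖L (g (φ n))‖)) atTop (nhds 0) := by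
    have := (hKgn.add (hLg0.comp hφ.tendsto_atTop)).const_mul C
    simpa using this
  have hone : (1:ℝ) ≤ 0 := by
    have hle : ∀ n, (1:ℝ) ≤ C * (‖K ((g (φ n) : H))‖ + ‖L (g (φ n))‖) := by
      intro n
      have := hest (g (φ n))
      rwa [hgnorm (φ n)] at this
    exact le_of_tendsto_of_tendsto' tendsto_const_nhds hsum hle
  linarith
end
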